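/- Let q be transcendental over ℚ (or work in the field ℂ(q) of rational functions), let μ be a Young diagram, let c₀ be an addable corner of μ with content k, and set λ = μ ∪ {c₀}. Define f(n) = i·(qⁿ + q⁻ⁿ)/(qⁿ − q⁻ⁿ) for positive integers n. Then ∏_{c∈λ} f(h_λ(c)) = ∏_{c∈μ} f(h_μ(c)) · f(1) · ∏_{a} (q^{2k} + q^{2a})/(q^{2k} − q^{2a}) · ∏_{b} (q^{2k} − q^{2b})/(q^{2k} + q^{2b}), where the first product runs over the contents a of the addable corners of μ other than c₀, and the second over the contents b of the removable corners of μ. -/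

import Mathlib

/-- A position `c` is an addable corner of the Young diagram `μ` if `c ∉ μ` and
adding `c` to `μ` yields a Young diagram. -/
def IsAddable (μ : YoungDiagram) (c : ℕ × ℕ) : Prop :=
  c ∉ μ ∧ ∃ ν : YoungDiagram, ν.cells = insert c μ.cells

/-- A cell `c` is a removable corner of the Young diagram `μ` if `c ∈ μ` and
removing `c` from `μ` yields a Young diagram. -/
def IsRemovable (μ : YoungDiagram) (c : ℕ × ℕ) : Prop :=
  c ∈ μ ∧ ∃ ν : YoungDiagram, ν.cells = μ.cells.erase c

/-- The content `j - i` of the cell `c = (i, j)`. -/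
def content (c : ℕ × ℕ) : ℤ :=
  (c.2 : ℤ) - (c.1 : ℤ)

open Classical in
/-- The Young diagram obtained by adding the cell `c` to `μ` (equal to `μ` if the
result would not be a Young diagram). -/
noncomputable def addCell (μ : YoungDiagram) (c : ℕ × ℕ) : YoungDiagram :=
  if h : ∃ ν : YoungDiagram, ν.cells = insert c μ.cells then h.choose else μ

/-- The hook length of the cell `(i, j)` in a Young diagram `μ`. -/
def hookLength (μ : YoungDiagram) (i j : ℕ) : ℕ :=
  (μ.rowLen i - j) + (μ.colLen j - i) - 1

/-- The hook-length factor `i (qⁿ + q⁻ⁿ)/(qⁿ - q⁻ⁿ)`. -/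
noncomputable def hookFactor (q : ℂ) (n : ℕ) : ℂ :=
  Complex.I * (q ^ (n : ℤ) + q ^ (-(n : ℤ))) / (q ^ (n : ℤ) - q ^ (-(n : ℤ)))


noncomputable def Fq (q : ℂ) (n : ℤ) : ℂ := (q ^ (2 * n) + 1) / (q ^ (2 * n) - 1)

section Trans
variable {q : ℂ} (hq : Transcendental ℚ q)

include hq

lemma tq_ne_zero : q ≠ 0 := by
  intro h
  exact hq (h ▸ isAlgebraic_zero)

lemma tq_pow_ne_one {n : ℕ} (hn : n ≠ 0) : q ^ n ≠ 1 := by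
  intro h
  apply hq
  refine ⟨Polynomial.X ^ n - Polynomial.C 1, ?_, ?_⟩
  · intro hC
    have := Polynomial.X_pow_sub_C_ne_zero (Nat.pos_of_ne_zero hn) (1 : ℚ)
    exact this hC
  · simp [h]

lemma tq_pow_ne_neg_one {n : ℕ} (hn : n ≠ 0) : q ^ n ≠ -1 := by
  intro h
  apply hq
  refine ⟨Polynomial.X ^ n - Polynomial.C (-1), ?_, ?_⟩
  · intro hC
    have := Polynomial.X_pow_sub_C_ne_zero (Nat.pos_of_ne_zero hn) (-1 : ℚ)
    exact this hC
  · simp [h]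

lemma tq_zpow_ne_one {n : ℤ} (hn : n ≠ 0) : q ^ n ≠ 1 := by
  intro h
  rcases n.lt_or_lt_of_ne hn with h' | h'
  · have h1 : q ^ (-n) = 1 := by rw [zpow_neg, h, inv_one]
    have : q ^ (-n).toNat = 1 := by
      rw [← zpow_natCast, Int.toNat_of_nonneg (by omega)]; exact h1
    exact tq_pow_ne_one hq (by omega) this
  · have : q ^ n.toNat = 1 := by rw [← zpow_natCast, Int.toNat_of_nonneg (by omega)]; exact h
    exact tq_pow_ne_one hq (by omega) this

lemma tq_zpow_ne_neg_one (n : ℤ) : q ^ n ≠ -1 := by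
  intro h
  rcases lt_trichotomy n 0 with h' | h' | h'
  · have : q ^ (-n).toNat = -1 := by
      rw [← zpow_natCast, Int.toNat_of_nonneg (by omega), zpow_neg, h]
      norm_num
    exact tq_pow_ne_neg_one hq (by omega) this
  · subst h'; simp at h; norm_num at h
  · have : q ^ n.toNat = -1 := by rw [← zpow_natCast, Int.toNat_of_nonneg (by omega)]; exact h
    exact tq_pow_ne_neg_one hq (by omega) this

lemma tq_zpow_ne_zpow {a b : ℤ} (hab : a ≠ b) : q ^ a ≠ q ^ b := by
  intro h
  have h0 := tq_ne_zero hq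
  have : q ^ (a - b) = 1 := by
    rw [zpow_sub₀ h0, h, div_self (zpow_ne_zero _ h0)]
  exact tq_zpow_ne_one hq (by omega) this

lemma tq_zpow_ne_neg_zpow (a b : ℤ) : q ^ a ≠ -q ^ b := by
  intro h
  have h0 := tq_ne_zero hq
  have : q ^ (a - b) = -1 := by
    rw [zpow_sub₀ h0, h, neg_div, div_self (zpow_ne_zero _ h0)]
  exact tq_zpow_ne_neg_one hq _ this

lemma Fq_den_ne {n : ℤ} (hn : n ≠ 0) : q ^ (2 * n) - 1 ≠ 0 := by
  intro h
  exact tq_zpow_ne_one hq (n := 2 * n) (by omega) (by linear_combination h)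

lemma Fq_num_ne (n : ℤ) : q ^ (2 * n) + 1 ≠ 0 := by
  intro h
  exact tq_zpow_ne_neg_one hq (2 * n) (by linear_combination h)

lemma Fq_ne_zero {n : ℤ} (hn : n ≠ 0) : Fq q n ≠ 0 :=
  div_ne_zero (Fq_num_ne hq n) (Fq_den_ne hq hn)

lemma Fq_neg {n : ℤ} (hn : n ≠ 0) : Fq q (-n) = -Fq q n := by
  have h0 := tq_ne_zero hq
  have hd := Fq_den_ne hq hn
  have hd' : q ^ (2 * -n) - 1 ≠ 0 := Fq_den_ne hq (by omega)
  have hx : q ^ (2 * -n) = (q ^ (2 * n))⁻¹ := by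
    rw [← zpow_neg]; ring_nf
  have hz : q ^ (2 * n) ≠ 0 := zpow_ne_zero _ h0
  rw [Fq, Fq, hx, ← div_neg, neg_sub]
  rw [div_eq_div_iff (by rwa [hx] at hd') (by
    intro h; apply hd; linear_combination -h)]
  field_simp
  ring

lemma Fq_sub {a b : ℤ} (hab : a ≠ b) :
    Fq q (a - b) = (q ^ (2 * a) + q ^ (2 * b)) / (q ^ (2 * a) - q ^ (2 * b)) := by
  have h0 := tq_ne_zero hq
  have hd := Fq_den_ne hq (show a - b ≠ 0 by omega)
  have hd2 : q ^ (2 * a) - q ^ (2 * b) ≠ 0 := by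
    intro h
    exact tq_zpow_ne_zpow hq (show 2*a ≠ 2*b by omega) (by linear_combination h)
  rw [Fq, div_eq_div_iff hd hd2]
  have e : q ^ (2 * (a - b)) * q ^ (2 * b) = q ^ (2 * a) := by
    rw [← zpow_add₀ h0]; ring_nf
  linear_combination (-2 : ℂ) * e
end Trans

lemma alg2 (T e x y : ℂ) (hx : x ≠ 0) : T * (x * e) * (y / x) = T * e * y := by
  rw [div_eq_mul_inv, show T * (x * e) * (y * x⁻¹) = T * e * y * (x * x⁻¹) by ring,
    mul_inv_cancel₀ hx, mul_one]

lemma telescope (G : ℤ → ℂ) (hG : ∀ n : ℤ, 1 ≤ n → G n ≠ 0) :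
    ∀ (s : ℕ) (r : ℤ) (c : ℕ → ℤ),
      (∀ j : ℕ, j < s → c (j + 1) ≤ c j) →
      (∀ j : ℕ, j < s → r + 1 ≤ c j) →
      c s = r →
      ∏ j ∈ Finset.range s, (G ((s : ℤ) - j + c j - r) / G ((s : ℤ) - j + c j - r - 1))
      = ∏ j ∈ Finset.range s,
          ((if j = 0 ∨ c j < c (j - 1) then G ((s : ℤ) - r - j + c j) else 1) *
           (if c (j + 1) < c j then G ((s : ℤ) - r - j + c j - 1) else 1)⁻¹) := by
  intro s
  induction s with
  | zero => intro r c _ _ _; simp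
  | succ s IH =>
    intro r c h1 h2 h3
    have hIH := IH r (fun j => c (j + 1)) (fun j hj => h1 (j + 1) (by omega))
      (fun j hj => h2 (j + 1) (by omega)) h3
    rw [Finset.prod_range_succ', Finset.prod_range_succ']
    have e1 : ∏ j ∈ Finset.range s,
        (G ((((s : ℕ) + 1 : ℕ) : ℤ) - ((j + 1 : ℕ) : ℤ) + c (j + 1) - r) /
          G ((((s : ℕ) + 1 : ℕ) : ℤ) - ((j + 1 : ℕ) : ℤ) + c (j + 1) - r - 1))
        = ∏ j ∈ Finset.range s,
          (G ((s : ℤ) - (j : ℤ) + c (j + 1) - r) / G ((s : ℤ) - (j : ℤ) + c (j + 1) - r - 1)) := by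
      refine Finset.prod_congr rfl fun j _ => ?_
      rw [show (((s : ℕ) + 1 : ℕ) : ℤ) - ((j + 1 : ℕ) : ℤ) + c (j + 1) - r
            = (s : ℤ) - (j : ℤ) + c (j + 1) - r by push_cast; ring]
    rw [e1, hIH]
    by_cases hlt : c 1 < c 0
    · -- boundary term matches directly
      have e2 : ∏ j ∈ Finset.range s,
          ((if j = 0 ∨ c (j + 1) < c (j - 1 + 1) then G ((s : ℤ) - r - (j : ℤ) + c (j + 1)) else 1) *
           (if c (j + 1 + 1) < c (j + 1) then G ((s : ℤ) - r - (j : ℤ) + c (j + 1) - 1) else 1)⁻¹)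
          = ∏ j ∈ Finset.range s,
          ((if (j + 1 = 0 ∨ c (j + 1) < c (j + 1 - 1)) then
              G ((((s : ℕ) + 1 : ℕ) : ℤ) - r - ((j + 1 : ℕ) : ℤ) + c (j + 1)) else 1) *
           (if c (j + 1 + 1) < c (j + 1) then
              G ((((s : ℕ) + 1 : ℕ) : ℤ) - r - ((j + 1 : ℕ) : ℤ) + c (j + 1) - 1) else 1)⁻¹) := by
        refine Finset.prod_congr rfl fun j _ => ?_
        rw [show (((s : ℕ) + 1 : ℕ) : ℤ) - r - ((j + 1 : ℕ) : ℤ) + c (j + 1)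
              = (s : ℤ) - r - (j : ℤ) + c (j + 1) by push_cast; ring]
        rcases Nat.eq_zero_or_pos j with hj0 | hj0
        · subst hj0
          norm_num [hlt]
        · rw [show j - 1 + 1 = j by omega, show j + 1 - 1 = j by omega]
          simp [show j ≠ 0 by omega]
      rw [e2]
      congr 1
      rw [if_pos (Or.inl rfl), if_pos (by simpa using hlt), div_eq_mul_inv]
      push_cast
      ring_nf
    · -- c 1 = c 0 : first two columns have equal length
      have hs : 0 < s := by
        rcases Nat.eq_zero_or_pos s with h | h
        · subst h
          have := h2 0 (by omega)
          rw [h3] at hlt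
          omega
        · exact h
      have hc10 : c 1 = c 0 := le_antisymm (h1 0 (by omega)) (not_lt.1 hlt)
      have h0mem : (0 : ℕ) ∈ Finset.range s := by simpa using hs
      rw [Finset.prod_eq_prod_diff_singleton_mul h0mem, Finset.prod_eq_prod_diff_singleton_mul h0mem
        (fun k => ((if k + 1 = 0 ∨ c (k + 1) < c (k + 1 - 1) then
              G ((((s : ℕ) + 1 : ℕ) : ℤ) - r - ((k + 1 : ℕ) : ℤ) + c (k + 1)) else 1) *
           (if c (k + 1 + 1) < c (k + 1) then
              G ((((s : ℕ) + 1 : ℕ) : ℤ) - r - ((k + 1 : ℕ) : ℤ) + c (k + 1) - 1) else 1)⁻¹))]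
      have eT : ∏ j ∈ Finset.range s \ {0},
          ((if j = 0 ∨ c (j + 1) < c (j - 1 + 1) then G ((s : ℤ) - r - (j : ℤ) + c (j + 1)) else 1) *
           (if c (j + 1 + 1) < c (j + 1) then G ((s : ℤ) - r - (j : ℤ) + c (j + 1) - 1) else 1)⁻¹)
          = ∏ j ∈ Finset.range s \ {0},
          ((if (j + 1 = 0 ∨ c (j + 1) < c (j + 1 - 1)) then
              G ((((s : ℕ) + 1 : ℕ) : ℤ) - r - ((j + 1 : ℕ) : ℤ) + c (j + 1)) else 1) *
           (if c (j + 1 + 1) < c (j + 1) then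
              G ((((s : ℕ) + 1 : ℕ) : ℤ) - r - ((j + 1 : ℕ) : ℤ) + c (j + 1) - 1) else 1)⁻¹) := by
        refine Finset.prod_congr rfl fun j hj => ?_
        have hj0 : j ≠ 0 := by simp at hj; tauto
        rw [show (((s : ℕ) + 1 : ℕ) : ℤ) - r - ((j + 1 : ℕ) : ℤ) + c (j + 1)
              = (s : ℤ) - r - (j : ℤ) + c (j + 1) by push_cast; ring]
        rw [show j - 1 + 1 = j by omega, show j + 1 - 1 = j by omega]
        simp [hj0]
      rw [eT]
      have hx : G ((s : ℤ) - r - (0:ℤ) + c (0 + 1)) ≠ 0 := by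
        refine hG _ ?_
        have := h2 0 (by omega)
        rw [hc10]
        omega
      norm_num [hlt, hc10]
      have hx' : G ((s : ℤ) - r + c 0) ≠ 0 := by
        have e : (s : ℤ) - r + c 0 = (s : ℤ) - r - 0 + c (0 + 1) := by rw [hc10]; ring
        rw [e]; exact hx
      rw [show (s : ℤ) + 1 + c 0 - r - 1 = (s : ℤ) - r + c 0 by ring,
          show (s : ℤ) + 1 - r - 1 + c 0 - 1 = (s : ℤ) - r + c 0 - 1 by ring,
          show (s : ℤ) + 1 + c 0 - r = (s : ℤ) + 1 - r + c 0 by ring]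
      exact alg2 _ _ _ _ hx' 

lemma rowLen_eq_of {μ : YoungDiagram} {i n : ℕ} (h1 : (i, n) ∉ μ)
    (h2 : ∀ m, m < n → (i, m) ∈ μ) : μ.rowLen i = n := by
  refine le_antisymm ?_ ?_
  · by_contra h
    push_neg at h
    exact h1 (YoungDiagram.mem_iff_lt_rowLen.2 h)
  · rcases Nat.eq_zero_or_pos n with h | h
    · omega
    · have := YoungDiagram.mem_iff_lt_rowLen.1 (h2 (n - 1) (by omega))
      omega

lemma colLen_eq_of {μ : YoungDiagram} {j n : ℕ} (h1 : (n, j) ∉ μ)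
    (h2 : ∀ m, m < n → (m, j) ∈ μ) : μ.colLen j = n := by
  refine le_antisymm ?_ ?_
  · by_contra h
    push_neg at h
    exact h1 (YoungDiagram.mem_iff_lt_colLen.2 h)
  · rcases Nat.eq_zero_or_pos n with h | h
    · omega
    · have := YoungDiagram.mem_iff_lt_colLen.1 (h2 (n - 1) (by omega))
      omega

lemma isAddable_iff {μ : YoungDiagram} {i j : ℕ} :
    IsAddable μ (i, j) ↔ μ.rowLen i = j ∧ μ.colLen j = i := by
  constructor
  · rintro ⟨hnot, ν, hν⟩
    have hmem : ∀ x : ℕ × ℕ, x ∈ ν ↔ x = (i, j) ∨ x ∈ μ := by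
      intro x
      rw [← YoungDiagram.mem_cells, hν, Finset.mem_insert, YoungDiagram.mem_cells]
    have hij : (i, j) ∈ ν := (hmem (i, j)).2 (Or.inl rfl)
    constructor
    · refine rowLen_eq_of hnot fun m hm => ?_
      have : (i, m) ∈ ν := ν.up_left_mem le_rfl hm.le hij
      rcases (hmem (i, m)).1 this with h | h
      · exfalso
        have : m = j := congrArg Prod.snd h
        omega
      · exact h
    · refine colLen_eq_of hnot fun m hm => ?_
      have : (m, j) ∈ ν := ν.up_left_mem hm.le le_rfl hij
      rcases (hmem (m, j)).1 this with h | h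
      · exfalso
        have : m = i := congrArg Prod.fst h
        omega
      · exact h
  · rintro ⟨hr, hc⟩
    have hnot : (i, j) ∉ μ := by
      rw [YoungDiagram.mem_iff_lt_rowLen, hr]
      omega
    refine ⟨hnot, ⟨insert (i, j) μ.cells, ?_⟩, rfl⟩
    rw [Finset.coe_insert]
    rintro ⟨b1, b2⟩ ⟨a1, a2⟩ hab hb
    obtain ⟨hab1, hab2⟩ := hab
    simp only [Set.mem_insert_iff] at hb ⊢
    rcases hb with hb | hb
    · have hbi : b1 = i := congrArg Prod.fst hb
      have hbj : b2 = j := congrArg Prod.snd hb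
      subst hbi; subst hbj
      simp only at hab1 hab2
      by_cases h2 : a2 = b2
      · by_cases h1 : a1 = b1
        · left; rw [h1, h2]
        · right
          rw [Finset.mem_coe, YoungDiagram.mem_cells, YoungDiagram.mem_iff_lt_colLen, h2, hc]
          omega
      · right
        rw [Finset.mem_coe, YoungDiagram.mem_cells, YoungDiagram.mem_iff_lt_rowLen]
        have h3 := μ.rowLen_anti a1 b1 hab1
        omega
    · exact Or.inr (μ.isLowerSet (by exact ⟨hab1, hab2⟩) hb)

lemma isRemovable_iff {μ : YoungDiagram} {i j : ℕ} :
    IsRemovable μ (i, j) ↔ μ.rowLen i = j + 1 ∧ μ.colLen j = i + 1 := by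
  constructor
  · rintro ⟨hmem, ν, hν⟩
    have hm : ∀ x : ℕ × ℕ, x ∈ ν ↔ x ≠ (i, j) ∧ x ∈ μ := by
      intro x
      rw [← YoungDiagram.mem_cells, hν, Finset.mem_erase, YoungDiagram.mem_cells]
    constructor
    · refine rowLen_eq_of ?_ fun m hm' => ?_
      · intro hj1
        have h1 : (i, j + 1) ∈ ν := (hm _).2 ⟨by simp, hj1⟩
        have h2 : (i, j) ∈ ν := ν.up_left_mem le_rfl (by omega) h1
        exact ((hm _).1 h2).1 rfl
      · exact μ.up_left_mem le_rfl (by omega) hmem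
    · refine colLen_eq_of ?_ fun m hm' => ?_
      · intro hj1
        have h1 : (i + 1, j) ∈ ν := (hm _).2 ⟨by simp, hj1⟩
        have h2 : (i, j) ∈ ν := ν.up_left_mem (by omega) le_rfl h1
        exact ((hm _).1 h2).1 rfl
      · exact μ.up_left_mem (by omega) le_rfl hmem
  · rintro ⟨hr, hc⟩
    have hmem : (i, j) ∈ μ := YoungDiagram.mem_iff_lt_rowLen.2 (by omega)
    refine ⟨hmem, ⟨μ.cells.erase (i, j), ?_⟩, rfl⟩
    rw [Finset.coe_erase]
    rintro ⟨b1, b2⟩ ⟨a1, a2⟩ hab hb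
    obtain ⟨hab1, hab2⟩ := hab
    simp only [Set.mem_diff, Set.mem_singleton_iff, Finset.mem_coe,
      YoungDiagram.mem_cells] at hb ⊢
    obtain ⟨hbμ, hbne⟩ := hb
    constructor
    · exact μ.up_left_mem hab1 hab2 hbμ
    · intro ha
      injection ha with ha1 ha2
      subst ha1; subst ha2
      simp only at hab1 hab2
      by_cases hbb : b2 = a2
      · have hb1 : a1 < b1 := by
          rcases Nat.lt_or_ge a1 b1 with h | h
          · exact h
          · refine absurd ?_ hbne
            rw [Prod.mk.injEq]
            exact ⟨le_antisymm h hab1, hbb⟩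
        have : (a1 + 1, a2) ∈ μ := μ.up_left_mem hb1 hbb.ge hbμ
        rw [YoungDiagram.mem_iff_lt_colLen, hc] at this
        omega
      · have hb2' : a2 < b2 := by omega
        have : (a1, a2 + 1) ∈ μ := μ.up_left_mem hab1 hb2' hbμ
        rw [YoungDiagram.mem_iff_lt_rowLen, hr] at this
        omega

lemma addCell_cells {μ : YoungDiagram} {c₀ : ℕ × ℕ}
    (h : ∃ ν : YoungDiagram, ν.cells = insert c₀ μ.cells) :
    (addCell μ c₀).cells = insert c₀ μ.cells := by
  rw [addCell, dif_pos h]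
  exact h.choose_spec

lemma mem_addCell {μ : YoungDiagram} {c₀ : ℕ × ℕ}
    (h : ∃ ν : YoungDiagram, ν.cells = insert c₀ μ.cells) (x : ℕ × ℕ) :
    x ∈ addCell μ c₀ ↔ x = c₀ ∨ x ∈ μ := by
  rw [← YoungDiagram.mem_cells, addCell_cells h, Finset.mem_insert, YoungDiagram.mem_cells]

lemma rowLen_addCell {μ : YoungDiagram} {r s : ℕ} (h : IsAddable μ (r, s)) (i : ℕ) :
    (addCell μ (r, s)).rowLen i = if i = r then s + 1 else μ.rowLen i := by
  obtain ⟨hr, hc⟩ := isAddable_iff.1 h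
  have hex := h.2
  split_ifs with hi
  · subst hi
    refine rowLen_eq_of ?_ fun m hm => ?_
    · rw [mem_addCell hex]
      push_neg
      constructor
      · simp
      · rw [YoungDiagram.mem_iff_lt_rowLen, hr]; omega
    · rw [mem_addCell hex]
      by_cases hms : m = s
      · subst hms; exact Or.inl rfl
      · right; rw [YoungDiagram.mem_iff_lt_rowLen, hr]; omega
  · refine rowLen_eq_of ?_ fun m hm => ?_
    · rw [mem_addCell hex]
      push_neg
      constructor
      · simp [hi]
      · rw [YoungDiagram.mem_iff_lt_rowLen]; omega
    · rw [mem_addCell hex]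
      right; rw [YoungDiagram.mem_iff_lt_rowLen]; omega

lemma colLen_addCell {μ : YoungDiagram} {r s : ℕ} (h : IsAddable μ (r, s)) (j : ℕ) :
    (addCell μ (r, s)).colLen j = if j = s then r + 1 else μ.colLen j := by
  obtain ⟨hr, hc⟩ := isAddable_iff.1 h
  have hex := h.2
  split_ifs with hj
  · subst hj
    refine colLen_eq_of ?_ fun m hm => ?_
    · rw [mem_addCell hex]
      push_neg
      constructor
      · simp
      · rw [YoungDiagram.mem_iff_lt_colLen, hc]; omega
    · rw [mem_addCell hex]
      by_cases hmr : m = r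
      · subst hmr; exact Or.inl rfl
      · right; rw [YoungDiagram.mem_iff_lt_colLen, hc]; omega
  · refine colLen_eq_of ?_ fun m hm => ?_
    · rw [mem_addCell hex]
      push_neg
      constructor
      · simp [hj]
      · rw [YoungDiagram.mem_iff_lt_colLen]; omega
    · rw [mem_addCell hex]
      right; rw [YoungDiagram.mem_iff_lt_colLen]; omega

lemma hook_addCell_row {μ : YoungDiagram} {r s : ℕ} (h : IsAddable μ (r, s)) {j : ℕ}
    (hj : j < s) : hookLength (addCell μ (r, s)) r j = hookLength μ r j + 1 := by
  obtain ⟨hr, hc⟩ := isAddable_iff.1 h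
  have h1 := rowLen_addCell h r
  have h2 := colLen_addCell h j
  rw [if_pos rfl] at h1
  rw [if_neg (by omega)] at h2
  have h3 : r < μ.colLen j :=
    YoungDiagram.mem_iff_lt_colLen.1 (YoungDiagram.mem_iff_lt_rowLen.2 (by omega))
  rw [hookLength, hookLength, h1, h2, hr]
  omega

lemma hook_addCell_col {μ : YoungDiagram} {r s : ℕ} (h : IsAddable μ (r, s)) {i : ℕ}
    (hi : i < r) : hookLength (addCell μ (r, s)) i s = hookLength μ i s + 1 := by
  obtain ⟨hr, hc⟩ := isAddable_iff.1 h
  have h1 := rowLen_addCell h i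
  have h2 := colLen_addCell h s
  rw [if_neg (by omega)] at h1
  rw [if_pos rfl] at h2
  have h3 : s < μ.rowLen i :=
    YoungDiagram.mem_iff_lt_rowLen.1 (YoungDiagram.mem_iff_lt_colLen.2 (by omega))
  rw [hookLength, hookLength, h1, h2, hc]
  omega

lemma hook_addCell_corner {μ : YoungDiagram} {r s : ℕ} (h : IsAddable μ (r, s)) :
    hookLength (addCell μ (r, s)) r s = 1 := by
  have h1 := rowLen_addCell h r
  have h2 := colLen_addCell h s
  rw [if_pos rfl] at h1 h2
  rw [hookLength, h1, h2]
  omega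

lemma hook_addCell_other {μ : YoungDiagram} {r s : ℕ} (h : IsAddable μ (r, s)) {i j : ℕ}
    (hir : i ≠ r) (hjs : j ≠ s) :
    hookLength (addCell μ (r, s)) i j = hookLength μ i j := by
  have h1 := rowLen_addCell h i
  have h2 := colLen_addCell h j
  rw [if_neg hir] at h1
  rw [if_neg hjs] at h2
  rw [hookLength, hookLength, h1, h2]

def Afin (μ : YoungDiagram) (r s : ℕ) : Finset (ℕ × ℕ) :=
  ((Finset.range s).filter (fun j => j = 0 ∨ μ.colLen j < μ.colLen (j - 1))).image
      (fun j => (μ.colLen j, j)) ∪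
    ((Finset.range r).filter (fun i => i = 0 ∨ μ.rowLen i < μ.rowLen (i - 1))).image
      (fun i => (i, μ.rowLen i))

def Rfin (μ : YoungDiagram) (r s : ℕ) : Finset (ℕ × ℕ) :=
  ((Finset.range s).filter (fun j => μ.colLen (j + 1) < μ.colLen j)).image
      (fun j => (μ.colLen j - 1, j)) ∪
    ((Finset.range r).filter (fun i => μ.rowLen (i + 1) < μ.rowLen i)).image
      (fun i => (i, μ.rowLen i - 1))

lemma colLen_mem_lt {μ : YoungDiagram} {r s : ℕ} (h : IsAddable μ (r, s)) {j : ℕ}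
    (hj : j < s) : r < μ.colLen j := by
  obtain ⟨hr, hc⟩ := isAddable_iff.1 h
  exact YoungDiagram.mem_iff_lt_colLen.1 (YoungDiagram.mem_iff_lt_rowLen.2 (by omega))

lemma rowLen_mem_lt {μ : YoungDiagram} {r s : ℕ} (h : IsAddable μ (r, s)) {i : ℕ}
    (hi : i < r) : s < μ.rowLen i := by
  obtain ⟨hr, hc⟩ := isAddable_iff.1 h
  exact YoungDiagram.mem_iff_lt_rowLen.1 (YoungDiagram.mem_iff_lt_colLen.2 (by omega))

lemma addable_set_eq {μ : YoungDiagram} {r s : ℕ} (h : IsAddable μ (r, s)) :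
    {c : ℕ × ℕ | IsAddable μ c ∧ c ≠ (r, s)} = ↑(Afin μ r s) := by
  obtain ⟨hrs, hcs⟩ := isAddable_iff.1 h
  ext ⟨i, j⟩
  simp only [Set.mem_setOf_eq, Afin, Finset.coe_union, Set.mem_union, Finset.mem_coe,
    Finset.mem_image, Finset.mem_filter, Finset.mem_range]
  constructor
  · rintro ⟨ha, hne⟩
    obtain ⟨hr, hc⟩ := isAddable_iff.1 ha
    rcases lt_trichotomy i r with hir | hir | hir
    · -- column part
      right
      refine ⟨i, ⟨hir, ?_⟩, by rw [hr]⟩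
      by_cases hi0 : i = 0
      · exact Or.inl hi0
      · right
        have hanti := μ.rowLen_anti (i - 1) i (by omega)
        rcases Nat.lt_or_ge (μ.rowLen i) (μ.rowLen (i - 1)) with hlt | hge
        · exact hlt
        · exfalso
          have h1 : (i - 1, j) ∈ μ := YoungDiagram.mem_iff_lt_colLen.2 (by omega)
          rw [YoungDiagram.mem_iff_lt_rowLen] at h1
          omega
    · exfalso
      apply hne
      rw [Prod.mk.injEq]
      exact ⟨hir, by rw [← hr, hir]; exact hrs⟩
    · -- row part
      left
      have hjs : j < s := by
        have h1 := μ.rowLen_anti r i hir.le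
        have : j ≠ s := by
          intro hj; rw [hj] at hc; omega
        omega
      refine ⟨j, ⟨hjs, ?_⟩, by rw [hc]⟩
      by_cases hj0 : j = 0
      · exact Or.inl hj0
      · right
        have hanti := μ.colLen_anti (j - 1) j (by omega)
        rcases Nat.lt_or_ge (μ.colLen j) (μ.colLen (j - 1)) with hlt | hge
        · exact hlt
        · exfalso
          have h1 : (i, j - 1) ∈ μ := YoungDiagram.mem_iff_lt_rowLen.2 (by omega)
          rw [YoungDiagram.mem_iff_lt_colLen] at h1
          omega
  · rintro (⟨j', ⟨hj's, hcond⟩, heq⟩ | ⟨i', ⟨hi'r, hcond⟩, heq⟩)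
    · rw [← heq]
      have hcolpos := colLen_mem_lt h hj's
      constructor
      · rw [isAddable_iff]
        refine ⟨?_, rfl⟩
        refine rowLen_eq_of ?_ fun m hm => ?_
        · rw [YoungDiagram.mem_iff_lt_colLen]; omega
        · rw [YoungDiagram.mem_iff_lt_colLen]
          have hanti := μ.colLen_anti m (j' - 1) (by omega)
          rcases hcond with h0 | hlt
          · omega
          · omega
      · intro hcontra
        have : μ.colLen j' = r := congrArg Prod.fst hcontra
        omega
    · rw [← heq]
      have hrowpos := rowLen_mem_lt h hi'r
      constructor
      · rw [isAddable_iff]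
        refine ⟨rfl, ?_⟩
        refine colLen_eq_of ?_ fun m hm => ?_
        · rw [YoungDiagram.mem_iff_lt_rowLen]; omega
        · rw [YoungDiagram.mem_iff_lt_rowLen]
          have hanti := μ.rowLen_anti m (i' - 1) (by omega)
          rcases hcond with h0 | hlt
          · omega
          · omega
      · intro hcontra
        have : i' = r := congrArg Prod.fst hcontra
        omega

lemma removable_set_eq {μ : YoungDiagram} {r s : ℕ} (h : IsAddable μ (r, s)) :
    {c : ℕ × ℕ | IsRemovable μ c} = ↑(Rfin μ r s) := by
  obtain ⟨hrs, hcs⟩ := isAddable_iff.1 h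
  ext ⟨i, j⟩
  simp only [Set.mem_setOf_eq, Rfin, Finset.coe_union, Set.mem_union, Finset.mem_coe,
    Finset.mem_image, Finset.mem_filter, Finset.mem_range]
  constructor
  · rintro ha
    obtain ⟨hr, hc⟩ := isRemovable_iff.1 ha
    rcases Nat.lt_or_ge i r with hir | hir
    · -- column part
      right
      refine ⟨i, ⟨hir, ?_⟩, by rw [hr]; simp⟩
      have hanti := μ.rowLen_anti i (i + 1) (by omega)
      rcases Nat.lt_or_ge (μ.rowLen (i + 1)) (μ.rowLen i) with hlt | hge
      · exact hlt
      · exfalso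
        have h1 : (i + 1, j) ∈ μ := YoungDiagram.mem_iff_lt_rowLen.2 (by omega)
        rw [YoungDiagram.mem_iff_lt_colLen] at h1
        omega
    · -- row part
      left
      have hjs : j < s := by
        rcases Nat.lt_or_ge j s with h' | h'
        · exact h'
        · exfalso
          have := μ.colLen_anti s j h'
          omega
      refine ⟨j, ⟨hjs, ?_⟩, by rw [hc]; simp⟩
      have hanti := μ.colLen_anti j (j + 1) (by omega)
      rcases Nat.lt_or_ge (μ.colLen (j + 1)) (μ.colLen j) with hlt | hge
      · exact hlt
      · exfalso
        have h1 : (i, j + 1) ∈ μ := YoungDiagram.mem_iff_lt_colLen.2 (by omega)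
        rw [YoungDiagram.mem_iff_lt_rowLen] at h1
        omega
  · rintro (⟨j', ⟨hj's, hcond⟩, heq⟩ | ⟨i', ⟨hi'r, hcond⟩, heq⟩)
    · rw [← heq]
      have hcolpos := colLen_mem_lt h hj's
      rw [isRemovable_iff]
      constructor
      · refine rowLen_eq_of ?_ fun m hm => ?_
        · rw [YoungDiagram.mem_iff_lt_colLen]; omega
        · rw [YoungDiagram.mem_iff_lt_colLen]
          have hanti := μ.colLen_anti m j' (by omega)
          omega
      · omega
    · rw [← heq]
      have hrowpos := rowLen_mem_lt h hi'r
      rw [isRemovable_iff]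
      constructor
      · omega
      · refine colLen_eq_of ?_ fun m hm => ?_
        · rw [YoungDiagram.mem_iff_lt_rowLen]; omega
        · rw [YoungDiagram.mem_iff_lt_rowLen]
          have hanti := μ.rowLen_anti m i' (by omega)
          omega
section P4
variable {q : ℂ} (hq : Transcendental ℚ q)

include hq

lemma hookFactor_eq {n : ℕ} (hn : n ≠ 0) :
    hookFactor q n = Complex.I * Fq q (n : ℤ) := by
  have h0 := tq_ne_zero hq
  have hA : q ^ (n : ℤ) ≠ 0 := zpow_ne_zero _ h0
  have hd : q ^ (n : ℤ) - q ^ (-(n : ℤ)) ≠ 0 :=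
    sub_ne_zero.2 (tq_zpow_ne_zpow hq (by omega))
  have hd2 : q ^ (2 * (n : ℤ)) - 1 ≠ 0 := Fq_den_ne hq (by omega)
  rw [hookFactor, Fq, show (2 * (n : ℤ)) = (n : ℤ) + (n : ℤ) by ring,
    zpow_add₀ h0, zpow_neg] at *
  field_simp

lemma row_prod {μ : YoungDiagram} {r s : ℕ} (h : IsAddable μ (r, s)) :
    ∏ j ∈ Finset.range s, hookFactor q (hookLength μ r j + 1)
    = (∏ j ∈ Finset.range s, hookFactor q (hookLength μ r j)) *
      ((∏ j ∈ (Finset.range s).filter (fun j => j = 0 ∨ μ.colLen j < μ.colLen (j - 1)),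
          (q ^ (2 * ((s : ℤ) - r)) + q ^ (2 * ((j : ℤ) - μ.colLen j))) /
          (q ^ (2 * ((s : ℤ) - r)) - q ^ (2 * ((j : ℤ) - μ.colLen j)))) *
       (∏ j ∈ (Finset.range s).filter (fun j => μ.colLen (j + 1) < μ.colLen j),
          (q ^ (2 * ((s : ℤ) - r)) - q ^ (2 * ((j : ℤ) - μ.colLen j + 1))) /
          (q ^ (2 * ((s : ℤ) - r)) + q ^ (2 * ((j : ℤ) - μ.colLen j + 1))))) := by
  obtain ⟨hrs, hcs⟩ := isAddable_iff.1 h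
  have hhook : ∀ j, j < s → (hookLength μ r j : ℤ) = (s : ℤ) - j + μ.colLen j - r - 1 := by
    intro j hj
    have h1 := colLen_mem_lt h hj
    rw [hookLength, hrs]
    omega
  have hge : ∀ j, j < s → 1 ≤ hookLength μ r j := by
    intro j hj
    have h1 := colLen_mem_lt h hj
    rw [hookLength, hrs]
    omega
  have stepAB : ∏ j ∈ Finset.range s, hookFactor q (hookLength μ r j + 1)
      = (∏ j ∈ Finset.range s, hookFactor q (hookLength μ r j)) *
        ∏ j ∈ Finset.range s,
          (Fq q ((s : ℤ) - j + μ.colLen j - r) / Fq q ((s : ℤ) - j + μ.colLen j - r - 1)) := by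
    rw [← Finset.prod_mul_distrib]
    refine Finset.prod_congr rfl fun j hj => ?_
    rw [Finset.mem_range] at hj
    have h1 := hge j hj
    have h2 := hhook j hj
    rw [hookFactor_eq hq (by omega), hookFactor_eq hq (by omega),
        show ((hookLength μ r j + 1 : ℕ) : ℤ) = (s : ℤ) - j + μ.colLen j - r by push_cast; omega,
        h2]
    have hnz : Fq q ((s : ℤ) - j + μ.colLen j - r - 1) ≠ 0 := by
      refine Fq_ne_zero hq ?_
      omega
    field_simp
  rw [stepAB]
  congr 1
  have htel := telescope (Fq q) (fun n hn => Fq_ne_zero hq (by omega)) s (r : ℤ)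
      (fun j => (μ.colLen j : ℤ))
      (fun j hj => by
        show ((μ.colLen (j + 1) : ℤ)) ≤ (μ.colLen j : ℤ)
        exact_mod_cast μ.colLen_anti j (j + 1) (by omega))
      (fun j hj => by
        show (r : ℤ) + 1 ≤ (μ.colLen j : ℤ)
        have := colLen_mem_lt h hj
        omega)
      (by show ((μ.colLen s : ℤ)) = (r : ℤ); exact_mod_cast hcs)
  rw [htel, Finset.prod_mul_distrib, Finset.prod_inv_distrib]
  rw [show (fun j : ℕ => if j = 0 ∨ ((μ.colLen j : ℤ)) < (μ.colLen (j - 1) : ℤ) then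
        Fq q ((s : ℤ) - (r : ℤ) - (j : ℤ) + (μ.colLen j : ℤ)) else 1)
      = (fun j : ℕ => if j = 0 ∨ μ.colLen j < μ.colLen (j - 1) then
        Fq q ((s : ℤ) - (r : ℤ) - (j : ℤ) + (μ.colLen j : ℤ)) else 1) from by
        funext j
        congr 1
        · simp only [eq_iff_iff]
          constructor
          · rintro (h1 | h1)
            · exact Or.inl h1
            · exact Or.inr (by exact_mod_cast h1)
          · rintro (h1 | h1)
            · exact Or.inl h1
            · exact Or.inr (by exact_mod_cast h1)]
  rw [show (fun j : ℕ => if ((μ.colLen (j + 1) : ℤ)) < (μ.colLen j : ℤ) then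
        Fq q ((s : ℤ) - (r : ℤ) - (j : ℤ) + (μ.colLen j : ℤ) - 1) else 1)
      = (fun j : ℕ => if μ.colLen (j + 1) < μ.colLen j then
        Fq q ((s : ℤ) - (r : ℤ) - (j : ℤ) + (μ.colLen j : ℤ) - 1) else 1) from by
        funext j
        congr 1
        · simp only [eq_iff_iff]
          exact ⟨fun h1 => by exact_mod_cast h1, fun h1 => by exact_mod_cast h1⟩]
  rw [← Finset.prod_filter, ← Finset.prod_filter]
  congr 1
  · refine Finset.prod_congr rfl fun j hj => ?_
    rw [Finset.mem_filter, Finset.mem_range] at hj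
    have h1 := colLen_mem_lt h hj.1
    rw [show (s : ℤ) - (r : ℤ) - (j : ℤ) + (μ.colLen j : ℤ)
          = ((s : ℤ) - r) - ((j : ℤ) - μ.colLen j) by ring,
        Fq_sub hq (by omega)]
  · rw [show (∏ j ∈ (Finset.range s).filter (fun j => μ.colLen (j + 1) < μ.colLen j),
          (q ^ (2 * ((s : ℤ) - r)) - q ^ (2 * ((j : ℤ) - μ.colLen j + 1))) /
          (q ^ (2 * ((s : ℤ) - r)) + q ^ (2 * ((j : ℤ) - μ.colLen j + 1))))
        = ∏ j ∈ (Finset.range s).filter (fun j => μ.colLen (j + 1) < μ.colLen j),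
          (Fq q ((s : ℤ) - (r : ℤ) - (j : ℤ) + (μ.colLen j : ℤ) - 1))⁻¹ from ?_,
      ← Finset.prod_inv_distrib]
    refine Finset.prod_congr rfl fun j hj => ?_
    rw [Finset.mem_filter, Finset.mem_range] at hj
    have h1 := colLen_mem_lt h hj.1
    rw [show (s : ℤ) - (r : ℤ) - (j : ℤ) + (μ.colLen j : ℤ) - 1
          = ((s : ℤ) - r) - ((j : ℤ) - μ.colLen j + 1) by ring,
        Fq_sub hq (by omega), inv_div]

lemma col_prod {μ : YoungDiagram} {r s : ℕ} (h : IsAddable μ (r, s)) :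
    ∏ i ∈ Finset.range r, hookFactor q (hookLength μ i s + 1)
    = (∏ i ∈ Finset.range r, hookFactor q (hookLength μ i s)) *
      ((∏ i ∈ (Finset.range r).filter (fun i => i = 0 ∨ μ.rowLen i < μ.rowLen (i - 1)),
          (q ^ (2 * ((s : ℤ) - r)) + q ^ (2 * ((μ.rowLen i : ℤ) - i))) /
          (q ^ (2 * ((s : ℤ) - r)) - q ^ (2 * ((μ.rowLen i : ℤ) - i)))) *
       (∏ i ∈ (Finset.range r).filter (fun i => μ.rowLen (i + 1) < μ.rowLen i),
          (q ^ (2 * ((s : ℤ) - r)) - q ^ (2 * ((μ.rowLen i : ℤ) - 1 - i))) /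
          (q ^ (2 * ((s : ℤ) - r)) + q ^ (2 * ((μ.rowLen i : ℤ) - 1 - i))))) := by
  obtain ⟨hrs, hcs⟩ := isAddable_iff.1 h
  have hhook : ∀ i, i < r → (hookLength μ i s : ℤ) = (r : ℤ) - i + μ.rowLen i - s - 1 := by
    intro i hi
    have h1 := rowLen_mem_lt h hi
    rw [hookLength, hcs]
    omega
  have hge : ∀ i, i < r → 1 ≤ hookLength μ i s := by
    intro i hi
    have h1 := rowLen_mem_lt h hi
    rw [hookLength, hcs]
    omega
  have stepAB : ∏ i ∈ Finset.range r, hookFactor q (hookLength μ i s + 1)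
      = (∏ i ∈ Finset.range r, hookFactor q (hookLength μ i s)) *
        ∏ i ∈ Finset.range r,
          (Fq q ((r : ℤ) - i + μ.rowLen i - s) / Fq q ((r : ℤ) - i + μ.rowLen i - s - 1)) := by
    rw [← Finset.prod_mul_distrib]
    refine Finset.prod_congr rfl fun i hi => ?_
    rw [Finset.mem_range] at hi
    have h1 := hge i hi
    have h2 := hhook i hi
    rw [hookFactor_eq hq (by omega), hookFactor_eq hq (by omega),
        show ((hookLength μ i s + 1 : ℕ) : ℤ) = (r : ℤ) - i + μ.rowLen i - s by push_cast; omega,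
        h2]
    have hnz : Fq q ((r : ℤ) - i + μ.rowLen i - s - 1) ≠ 0 := by
      refine Fq_ne_zero hq ?_
      omega
    field_simp
  rw [stepAB]
  congr 1
  have htel := telescope (fun n => -Fq q n)
      (fun n hn => neg_ne_zero.2 (Fq_ne_zero hq (by omega))) r (s : ℤ)
      (fun i => (μ.rowLen i : ℤ))
      (fun i hi => by
        show ((μ.rowLen (i + 1) : ℤ)) ≤ (μ.rowLen i : ℤ)
        exact_mod_cast μ.rowLen_anti i (i + 1) (by omega))
      (fun i hi => by
        show (s : ℤ) + 1 ≤ (μ.rowLen i : ℤ)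
        have := rowLen_mem_lt h hi
        omega)
      (by show ((μ.rowLen r : ℤ)) = (s : ℤ); exact_mod_cast hrs)
  rw [show (∏ i ∈ Finset.range r,
        (Fq q ((r : ℤ) - i + μ.rowLen i - s) / Fq q ((r : ℤ) - i + μ.rowLen i - s - 1)))
      = ∏ i ∈ Finset.range r,
        (-Fq q ((r : ℤ) - i + μ.rowLen i - s) / -Fq q ((r : ℤ) - i + μ.rowLen i - s - 1)) from
    Finset.prod_congr rfl fun i _ => (neg_div_neg_eq _ _).symm]
  rw [htel, Finset.prod_mul_distrib, Finset.prod_inv_distrib]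
  rw [show (fun i : ℕ => if i = 0 ∨ ((μ.rowLen i : ℤ)) < (μ.rowLen (i - 1) : ℤ) then
        -Fq q ((r : ℤ) - (s : ℤ) - (i : ℤ) + (μ.rowLen i : ℤ)) else 1)
      = (fun i : ℕ => if i = 0 ∨ μ.rowLen i < μ.rowLen (i - 1) then
        -Fq q ((r : ℤ) - (s : ℤ) - (i : ℤ) + (μ.rowLen i : ℤ)) else 1) from by
        funext i
        congr 1
        · simp only [eq_iff_iff]
          constructor
          · rintro (h1 | h1)
            · exact Or.inl h1
            · exact Or.inr (by exact_mod_cast h1)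
          · rintro (h1 | h1)
            · exact Or.inl h1
            · exact Or.inr (by exact_mod_cast h1)]
  rw [show (fun i : ℕ => if ((μ.rowLen (i + 1) : ℤ)) < (μ.rowLen i : ℤ) then
        -Fq q ((r : ℤ) - (s : ℤ) - (i : ℤ) + (μ.rowLen i : ℤ) - 1) else 1)
      = (fun i : ℕ => if μ.rowLen (i + 1) < μ.rowLen i then
        -Fq q ((r : ℤ) - (s : ℤ) - (i : ℤ) + (μ.rowLen i : ℤ) - 1) else 1) from by
        funext i
        congr 1
        · simp only [eq_iff_iff]
          exact ⟨fun h1 => by exact_mod_cast h1, fun h1 => by exact_mod_cast h1⟩]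
  rw [← Finset.prod_filter, ← Finset.prod_filter]
  congr 1
  · refine Finset.prod_congr rfl fun i hi => ?_
    rw [Finset.mem_filter, Finset.mem_range] at hi
    have h1 := rowLen_mem_lt h hi.1
    rw [← Fq_neg hq (show (r : ℤ) - (s : ℤ) - (i : ℤ) + (μ.rowLen i : ℤ) ≠ 0 by omega),
        show -((r : ℤ) - (s : ℤ) - (i : ℤ) + (μ.rowLen i : ℤ))
          = ((s : ℤ) - r) - ((μ.rowLen i : ℤ) - i) by ring,
        Fq_sub hq (by omega)]
  · rw [show (∏ i ∈ (Finset.range r).filter (fun i => μ.rowLen (i + 1) < μ.rowLen i),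
          (q ^ (2 * ((s : ℤ) - r)) - q ^ (2 * ((μ.rowLen i : ℤ) - 1 - i))) /
          (q ^ (2 * ((s : ℤ) - r)) + q ^ (2 * ((μ.rowLen i : ℤ) - 1 - i))))
        = ∏ i ∈ (Finset.range r).filter (fun i => μ.rowLen (i + 1) < μ.rowLen i),
          (-Fq q ((r : ℤ) - (s : ℤ) - (i : ℤ) + (μ.rowLen i : ℤ) - 1))⁻¹ from ?_,
      ← Finset.prod_inv_distrib]
    refine Finset.prod_congr rfl fun i hi => ?_
    rw [Finset.mem_filter, Finset.mem_range] at hi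
    have h1 := rowLen_mem_lt h hi.1
    rw [← Fq_neg hq (show (r : ℤ) - (s : ℤ) - (i : ℤ) + (μ.rowLen i : ℤ) - 1 ≠ 0 by omega),
        show -((r : ℤ) - (s : ℤ) - (i : ℤ) + (μ.rowLen i : ℤ) - 1)
          = ((s : ℤ) - r) - ((μ.rowLen i : ℤ) - 1 - i) by ring,
        Fq_sub hq (by omega), inv_div]
end P4

section P5
variable {q : ℂ} (hq : Transcendental ℚ q)

lemma finprod_addable {μ : YoungDiagram} {r s : ℕ} (h : IsAddable μ (r, s)) :
    (∏ᶠ c ∈ {c : ℕ × ℕ | IsAddable μ c ∧ c ≠ (r, s)},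
        (q ^ (2 * ((s : ℤ) - r)) + q ^ (2 * content c)) /
        (q ^ (2 * ((s : ℤ) - r)) - q ^ (2 * content c)))
    = (∏ j ∈ (Finset.range s).filter (fun j => j = 0 ∨ μ.colLen j < μ.colLen (j - 1)),
          (q ^ (2 * ((s : ℤ) - r)) + q ^ (2 * ((j : ℤ) - μ.colLen j))) /
          (q ^ (2 * ((s : ℤ) - r)) - q ^ (2 * ((j : ℤ) - μ.colLen j)))) *
      (∏ i ∈ (Finset.range r).filter (fun i => i = 0 ∨ μ.rowLen i < μ.rowLen (i - 1)),
          (q ^ (2 * ((s : ℤ) - r)) + q ^ (2 * ((μ.rowLen i : ℤ) - i))) /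
          (q ^ (2 * ((s : ℤ) - r)) - q ^ (2 * ((μ.rowLen i : ℤ) - i)))) := by
  rw [addable_set_eq h, finprod_mem_coe_finset, Afin, Finset.prod_union ?hdisj]
  case hdisj =>
    rw [Finset.disjoint_left]
    rintro x hx1 hx2
    simp only [Finset.mem_image, Finset.mem_filter, Finset.mem_range] at hx1 hx2
    obtain ⟨j, ⟨hj, _⟩, hxe⟩ := hx1
    obtain ⟨i, ⟨hi, _⟩, hxe'⟩ := hx2
    have h1 := colLen_mem_lt h hj
    have e1 : x.1 = μ.colLen j := by rw [← hxe]
    have e2 : x.1 = i := by rw [← hxe']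
    omega
  congr 1
  · rw [Finset.prod_image (fun x hx y hy hxy => by
      have := congrArg Prod.snd hxy
      simpa using this)]
    refine Finset.prod_congr rfl fun j hj => ?_
    simp only [content]
  · rw [Finset.prod_image (fun x hx y hy hxy => by
      have := congrArg Prod.fst hxy
      simpa using this)]
    refine Finset.prod_congr rfl fun i hi => ?_
    simp only [content]

lemma finprod_removable {μ : YoungDiagram} {r s : ℕ} (h : IsAddable μ (r, s)) :
    (∏ᶠ c ∈ {c : ℕ × ℕ | IsRemovable μ c},
        (q ^ (2 * ((s : ℤ) - r)) - q ^ (2 * content c)) /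
        (q ^ (2 * ((s : ℤ) - r)) + q ^ (2 * content c)))
    = (∏ j ∈ (Finset.range s).filter (fun j => μ.colLen (j + 1) < μ.colLen j),
          (q ^ (2 * ((s : ℤ) - r)) - q ^ (2 * ((j : ℤ) - μ.colLen j + 1))) /
          (q ^ (2 * ((s : ℤ) - r)) + q ^ (2 * ((j : ℤ) - μ.colLen j + 1)))) *
      (∏ i ∈ (Finset.range r).filter (fun i => μ.rowLen (i + 1) < μ.rowLen i),
          (q ^ (2 * ((s : ℤ) - r)) - q ^ (2 * ((μ.rowLen i : ℤ) - 1 - i))) /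
          (q ^ (2 * ((s : ℤ) - r)) + q ^ (2 * ((μ.rowLen i : ℤ) - 1 - i)))) := by
  rw [removable_set_eq h, finprod_mem_coe_finset, Rfin, Finset.prod_union ?hdisj]
  case hdisj =>
    rw [Finset.disjoint_left]
    rintro x hx1 hx2
    simp only [Finset.mem_image, Finset.mem_filter, Finset.mem_range] at hx1 hx2
    obtain ⟨j, ⟨hj, _⟩, hxe⟩ := hx1
    obtain ⟨i, ⟨hi, _⟩, hxe'⟩ := hx2
    have h1 := colLen_mem_lt h hj
    have e1 : x.1 = μ.colLen j - 1 := by rw [← hxe]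
    have e2 : x.1 = i := by rw [← hxe']
    omega
  congr 1
  · rw [Finset.prod_image (fun x hx y hy hxy => by
      have := congrArg Prod.snd hxy
      simpa using this)]
    refine Finset.prod_congr rfl fun j hj => ?_
    rw [Finset.mem_filter, Finset.mem_range] at hj
    have h1 := colLen_mem_lt h hj.1
    have e : content (μ.colLen j - 1, j) = (j : ℤ) - μ.colLen j + 1 := by
      simp only [content]
      push_cast [show 1 ≤ μ.colLen j by omega]
      ring
    rw [e]
  · rw [Finset.prod_image (fun x hx y hy hxy => by
      have := congrArg Prod.fst hxy
      simpa using this)]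
    refine Finset.prod_congr rfl fun i hi => ?_
    rw [Finset.mem_filter, Finset.mem_range] at hi
    have h1 := rowLen_mem_lt h hi.1
    have e : content (i, μ.rowLen i - 1) = (μ.rowLen i : ℤ) - 1 - i := by
      simp only [content]
      push_cast [show 1 ≤ μ.rowLen i by omega]
      ring
    rw [e]

lemma cells_filter_row {μ : YoungDiagram} {r s : ℕ} (h : IsAddable μ (r, s)) :
    μ.cells.filter (fun c => c.1 = r) = (Finset.range s).image (fun j => (r, j)) := by
  obtain ⟨hrs, hcs⟩ := isAddable_iff.1 h
  ext ⟨i, j⟩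
  simp only [Finset.mem_filter, YoungDiagram.mem_cells, Finset.mem_image, Finset.mem_range]
  constructor
  · rintro ⟨hmem, hi⟩
    refine ⟨j, ?_, by rw [hi]⟩
    rw [YoungDiagram.mem_iff_lt_rowLen, hi, hrs] at hmem
    exact hmem
  · rintro ⟨j', hj', heq⟩
    injection heq with h1 h2
    subst h1
    subst h2
    exact ⟨YoungDiagram.mem_iff_lt_rowLen.2 (by omega), rfl⟩

lemma cells_filter_col {μ : YoungDiagram} {r s : ℕ} (h : IsAddable μ (r, s)) :
    (μ.cells.filter (fun c => ¬(c.1 = r))).filter (fun c => c.2 = s)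
      = (Finset.range r).image (fun i => (i, s)) := by
  obtain ⟨hrs, hcs⟩ := isAddable_iff.1 h
  ext ⟨i, j⟩
  simp only [Finset.mem_filter, YoungDiagram.mem_cells, Finset.mem_image, Finset.mem_range]
  constructor
  · rintro ⟨⟨hmem, hi⟩, hj⟩
    refine ⟨i, ?_, by rw [hj]⟩
    rw [YoungDiagram.mem_iff_lt_colLen, hj, hcs] at hmem
    exact hmem
  · rintro ⟨i', hi', heq⟩
    injection heq with h1 h2
    subst h1
    subst h2
    exact ⟨⟨YoungDiagram.mem_iff_lt_colLen.2 (by omega), by omega⟩, rfl⟩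
end P5

/-- Recursion for the hook-length product under adding an addable corner of content `k`:
the step of the proof of the trace formula `⟨λ⟩ = ∏_{c∈λ} i(q^{h(c)}+q^{-h(c)})/(q^{h(c)}-q^{-h(c)})`. -/
theorem hook_product_recursion (q : ℂ) (hq : Transcendental ℚ q)
    (μ : YoungDiagram) (c₀ : ℕ × ℕ) (hc₀ : IsAddable μ c₀) (k : ℤ)
    (hk : content c₀ = k) :
    (∏ c ∈ (addCell μ c₀).cells, hookFactor q (hookLength (addCell μ c₀) c.1 c.2)) =
      (∏ c ∈ μ.cells, hookFactor q (hookLength μ c.1 c.2)) * hookFactor q 1 *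
        (∏ᶠ c ∈ {c : ℕ × ℕ | IsAddable μ c ∧ c ≠ c₀},
          (q ^ (2 * k) + q ^ (2 * content c)) / (q ^ (2 * k) - q ^ (2 * content c))) *
        (∏ᶠ c ∈ {c : ℕ × ℕ | IsRemovable μ c},
          (q ^ (2 * k) - q ^ (2 * content c)) / (q ^ (2 * k) + q ^ (2 * content c))) := by
  obtain ⟨r, s⟩ := c₀
  subst hk
  obtain ⟨hrs, hcs⟩ := isAddable_iff.1 hc₀
  have hex := hc₀.2
  have hcontent : content (r, s) = (s : ℤ) - r := rfl
  rw [hcontent]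
  rw [addCell_cells hex, Finset.prod_insert (by rw [YoungDiagram.mem_cells]; exact hc₀.1)]
  have e0 : hookLength (addCell μ (r, s)) (r, s).1 (r, s).2 = 1 := hook_addCell_corner hc₀
  rw [e0]
  have hsplit : ∀ (f : ℕ × ℕ → ℂ), (∏ c ∈ μ.cells, f c)
      = (∏ c ∈ μ.cells.filter (fun c => c.1 = r), f c) *
        ((∏ c ∈ (μ.cells.filter (fun c => ¬(c.1 = r))).filter (fun c => c.2 = s), f c) *
         (∏ c ∈ (μ.cells.filter (fun c => ¬(c.1 = r))).filter (fun c => ¬(c.2 = s)), f c)) := by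
    intro f
    rw [← Finset.prod_filter_mul_prod_filter_not μ.cells (fun c => c.1 = r) f,
        ← Finset.prod_filter_mul_prod_filter_not (μ.cells.filter (fun c => ¬(c.1 = r)))
          (fun c => c.2 = s) f]
  rw [hsplit (fun c => hookFactor q (hookLength (addCell μ (r, s)) c.1 c.2)),
      hsplit (fun c => hookFactor q (hookLength μ c.1 c.2))]
  have hinjr : ∀ x ∈ Finset.range s, ∀ y ∈ Finset.range s,
      (r, x) = (r, y) → x = y := by
    intro x _ y _ hxy
    injection hxy
  have hinjc : ∀ x ∈ Finset.range r, ∀ y ∈ Finset.range r,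
      (x, s) = (y, s) → x = y := by
    intro x _ y _ hxy
    injection hxy
  have hRowA : (∏ c ∈ μ.cells.filter (fun c => c.1 = r),
        hookFactor q (hookLength (addCell μ (r, s)) c.1 c.2))
      = ∏ j ∈ Finset.range s, hookFactor q (hookLength μ r j + 1) := by
    rw [cells_filter_row hc₀, Finset.prod_image hinjr]
    refine Finset.prod_congr rfl fun j hj => ?_
    rw [Finset.mem_range] at hj
    show hookFactor q (hookLength (addCell μ (r, s)) r j) = _
    rw [hook_addCell_row hc₀ hj]
  have hRowB : (∏ c ∈ μ.cells.filter (fun c => c.1 = r),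
        hookFactor q (hookLength μ c.1 c.2))
      = ∏ j ∈ Finset.range s, hookFactor q (hookLength μ r j) := by
    rw [cells_filter_row hc₀, Finset.prod_image hinjr]
  have hColA : (∏ c ∈ (μ.cells.filter (fun c => ¬(c.1 = r))).filter (fun c => c.2 = s),
        hookFactor q (hookLength (addCell μ (r, s)) c.1 c.2))
      = ∏ i ∈ Finset.range r, hookFactor q (hookLength μ i s + 1) := by
    rw [cells_filter_col hc₀, Finset.prod_image hinjc]
    refine Finset.prod_congr rfl fun i hi => ?_
    rw [Finset.mem_range] at hi
    show hookFactor q (hookLength (addCell μ (r, s)) i s) = _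
    rw [hook_addCell_col hc₀ hi]
  have hColB : (∏ c ∈ (μ.cells.filter (fun c => ¬(c.1 = r))).filter (fun c => c.2 = s),
        hookFactor q (hookLength μ c.1 c.2))
      = ∏ i ∈ Finset.range r, hookFactor q (hookLength μ i s) := by
    rw [cells_filter_col hc₀, Finset.prod_image hinjc]
  have hRest : (∏ c ∈ (μ.cells.filter (fun c => ¬(c.1 = r))).filter (fun c => ¬(c.2 = s)),
        hookFactor q (hookLength (addCell μ (r, s)) c.1 c.2))
      = ∏ c ∈ (μ.cells.filter (fun c => ¬(c.1 = r))).filter (fun c => ¬(c.2 = s)),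
        hookFactor q (hookLength μ c.1 c.2) := by
    refine Finset.prod_congr rfl fun c hc => ?_
    simp only [Finset.mem_filter] at hc
    rw [hook_addCell_other hc₀ hc.1.2 hc.2]
  rw [hRowA, hRowB, hColA, hColB, hRest, row_prod hq hc₀, col_prod hq hc₀,
    finprod_addable hc₀, finprod_removable hc₀]
  ring
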